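/- Let n ≥ 3 and let F_n be the free group freely generated by x₁, x₂, …, x_n. For every m ≥ 1 and every k ≥ 2, the equation x₁^m x₂^m ⋯ x_n^m = a^k b^k has no solution a, b ∈ F_n. -/

import Mathlib

open Polynomial Finset

/-! Auxiliary: the affine group over a commutative ring. -/

@[ext]
structure AffAux (R : Type*) [CommRing R] where
  s : Rˣ
  t : R

namespace AffAux

variable {R : Type*} [CommRing R]

instance : Mul (AffAux R) := ⟨fun x y => ⟨x.s * y.s, (x.s : R) * y.t + x.t⟩⟩
instance : One (AffAux R) := ⟨⟨1, 0⟩⟩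
instance : Inv (AffAux R) := ⟨fun x => ⟨x.s⁻¹, -((x.s⁻¹ : Rˣ) : R) * x.t⟩⟩

@[simp] lemma mul_s (x y : AffAux R) : (x * y).s = x.s * y.s := rfl
@[simp] lemma mul_t (x y : AffAux R) : (x * y).t = (x.s : R) * y.t + x.t := rfl
@[simp] lemma one_s : (1 : AffAux R).s = 1 := rfl
@[simp] lemma one_t : (1 : AffAux R).t = 0 := rfl
@[simp] lemma inv_s (x : AffAux R) : (x⁻¹).s = x.s⁻¹ := rfl
@[simp] lemma inv_t (x : AffAux R) : (x⁻¹).t = -((x.s⁻¹ : Rˣ) : R) * x.t := rfl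

instance : Group (AffAux R) where
  mul := (· * ·)
  one := 1
  inv := Inv.inv
  mul_assoc a b c := by ext <;> simp [Units.val_mul] <;> ring
  one_mul a := by ext <;> simp
  mul_one a := by ext <;> simp
  inv_mul_cancel a := by ext <;> simp

/-- embedding of units with zero translation -/
def iota : Rˣ →* AffAux R where
  toFun u := ⟨u, 0⟩
  map_one' := rfl
  map_mul' u v := by ext <;> simp

@[simp] lemma iota_s (u : Rˣ) : (iota u).s = u := rfl
@[simp] lemma iota_t (u : Rˣ) : (iota u).t = 0 := rfl

/-- projection to the multiplier -/
def sHom : AffAux R →* Rˣ where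
  toFun := AffAux.s
  map_one' := rfl
  map_mul' _ _ := rfl

lemma pow_s (x : AffAux R) (n : ℕ) : (x ^ n).s = x.s ^ n := map_pow sHom x n

lemma pow_t (x : AffAux R) (n : ℕ) :
    (x ^ n).t = (∑ j ∈ Finset.range n, ((x.s : R)) ^ j) * x.t := by
  induction n with
  | zero => simp
  | succ n ih =>
    rw [pow_succ, mul_t, ih, pow_s, Finset.sum_range_succ, add_mul]
    simp [Units.val_pow_eq_pow_val]
    ring

end AffAux

/-! Auxiliary: binomial with a square-zero element. -/

lemma one_add_sq_zero_pow {R : Type*} [CommRing R] (T : R) (hT : T * T = 0) (r : ℕ) :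
    (1 + T) ^ r = 1 + (r : R) * T := by
  induction r with
  | zero => simp
  | succ r ih =>
    rw [pow_succ, ih]
    have expand : (1 + (r : R) * T) * (1 + T)
        = 1 + ((r : R) + 1) * T + (r : R) * (T * T) := by ring
    rw [expand, hT, mul_zero, add_zero]
    push_cast
    ring

/-! Auxiliary: integer orthogonality lemmas. -/

lemma triple_orth (a0 a1 a2 b0 b1 b2 : ℤ) :
    ∃ v0 v1 v2 : ℤ, ¬(v0 = 0 ∧ v1 = 0 ∧ v2 = 0) ∧
      v0*a0 + v1*a1 + v2*a2 = 0 ∧ v0*b0 + v1*b1 + v2*b2 = 0 := by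
  by_cases hc : a1*b2 - a2*b1 = 0 ∧ a2*b0 - a0*b2 = 0 ∧ a0*b1 - a1*b0 = 0
  · obtain ⟨c1, c2, c3⟩ := hc
    by_cases h01 : a0 = 0 ∧ a1 = 0
    · obtain ⟨ha0, ha1⟩ := h01
      by_cases ha2 : a2 = 0
      · by_cases hb01 : b0 = 0 ∧ b1 = 0
        · exact ⟨1, 0, 0, by simp, by simp [ha0], by simp [hb01.1]⟩
        · refine ⟨b1, -b0, 0, ?_, by rw [ha0, ha1]; ring, by ring⟩
          intro hcon
          exact hb01 ⟨by omega, hcon.1⟩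
      · have hb0 : b0 = 0 := by
          have hz : a2 * b0 = 0 := by linear_combination c2 + b2 * ha0
          rcases mul_eq_zero.mp hz with h' | h'
          · exact absurd h' ha2
          · exact h'
        exact ⟨1, 0, 0, by simp, by simp [ha0], by simp [hb0]⟩
    · refine ⟨a1, -a0, 0, ?_, by ring, by linear_combination -c3⟩
      intro hcon
      exact h01 ⟨by omega, hcon.1⟩
  · refine ⟨a1*b2 - a2*b1, a2*b0 - a0*b2, a0*b1 - a1*b0, hc, by ring, by ring⟩

lemma descent_orth (p : ℕ) (hp : 2 ≤ p) :
    ∀ N : ℕ, ∀ v0 v1 v2 a0 a1 a2 b0 b1 b2 : ℤ,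
      v0.natAbs + v1.natAbs + v2.natAbs ≤ N →
      ¬(v0 = 0 ∧ v1 = 0 ∧ v2 = 0) →
      v0*a0 + v1*a1 + v2*a2 = 0 → v0*b0 + v1*b1 + v2*b2 = 0 →
      ∃ u0 u1 u2 : ℤ, u0*a0 + u1*a1 + u2*a2 = 0 ∧ u0*b0 + u1*b1 + u2*b2 = 0 ∧
        (¬(p:ℤ) ∣ u0 ∨ ¬(p:ℤ) ∣ u1 ∨ ¬(p:ℤ) ∣ u2) := by
  intro N
  induction N with
  | zero =>
    intro v0 v1 v2 _ _ _ _ _ _ hN hnz _ _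
    exfalso
    apply hnz
    refine ⟨?_, ?_, ?_⟩ <;> rw [← Int.natAbs_eq_zero] <;> omega
  | succ N ih =>
    intro v0 v1 v2 a0 a1 a2 b0 b1 b2 hN hnz hda hdb
    by_cases hdvd : (p:ℤ) ∣ v0 ∧ (p:ℤ) ∣ v1 ∧ (p:ℤ) ∣ v2
    · obtain ⟨⟨u0, h0⟩, ⟨u1, h1⟩, ⟨u2, h2⟩⟩ := hdvd
      have hpz : (p:ℤ) ≠ 0 := by exact_mod_cast (by omega : p ≠ 0)
      have e0 : v0.natAbs = p * u0.natAbs := by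
        rw [h0, Int.natAbs_mul, Int.natAbs_natCast]
      have e1 : v1.natAbs = p * u1.natAbs := by
        rw [h1, Int.natAbs_mul, Int.natAbs_natCast]
      have e2 : v2.natAbs = p * u2.natAbs := by
        rw [h2, Int.natAbs_mul, Int.natAbs_natCast]
      have hvnz : ¬(v0.natAbs = 0 ∧ v1.natAbs = 0 ∧ v2.natAbs = 0) := by
        simpa [Int.natAbs_eq_zero] using hnz
      have hda' : u0*a0 + u1*a1 + u2*a2 = 0 := by
        have hmul : (p:ℤ) * (u0*a0 + u1*a1 + u2*a2) = 0 := by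
          rw [h0, h1, h2] at hda; linear_combination hda
        rcases mul_eq_zero.mp hmul with h' | h'
        · exact absurd h' hpz
        · exact h'
      have hdb' : u0*b0 + u1*b1 + u2*b2 = 0 := by
        have hmul : (p:ℤ) * (u0*b0 + u1*b1 + u2*b2) = 0 := by
          rw [h0, h1, h2] at hdb; linear_combination hdb
        rcases mul_eq_zero.mp hmul with h' | h'
        · exact absurd h' hpz
        · exact h'
      have hnz' : ¬(u0 = 0 ∧ u1 = 0 ∧ u2 = 0) := by
        rintro ⟨rfl, rfl, rfl⟩
        exact hnz ⟨by rw [h0, mul_zero], by rw [h1, mul_zero], by rw [h2, mul_zero]⟩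
      have hN' : u0.natAbs + u1.natAbs + u2.natAbs ≤ N := by
        have hpos : 1 ≤ v0.natAbs + v1.natAbs + v2.natAbs := by
          by_contra hcon
          exact hvnz ⟨by omega, by omega, by omega⟩
        nlinarith [e0, e1, e2]
      exact ih u0 u1 u2 a0 a1 a2 b0 b1 b2 hN' hnz' hda' hdb'
    · exact ⟨v0, v1, v2, hda, hdb, by tauto⟩

lemma exists_orth_vec {n : ℕ} (hn : 3 ≤ n) (p : ℕ) (hp : 2 ≤ p) (A B : Fin n → ℤ) :
    ∃ g : Fin n → ℤ, (∑ i, g i * A i) = 0 ∧ (∑ i, g i * B i) = 0 ∧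
      ∃ i, ¬(p:ℤ) ∣ g i := by
  classical
  have h0n : 0 < n := by omega
  have h1n : 1 < n := by omega
  have h2n : 2 < n := by omega
  set i0 : Fin n := ⟨0, h0n⟩ with hi0
  set i1 : Fin n := ⟨1, h1n⟩ with hi1
  set i2 : Fin n := ⟨2, h2n⟩ with hi2
  have h01 : i0 ≠ i1 := by simp [hi0, hi1, Fin.ext_iff]
  have h02 : i0 ≠ i2 := by simp [hi0, hi2, Fin.ext_iff]
  have h12 : i1 ≠ i2 := by simp [hi1, hi2, Fin.ext_iff]
  obtain ⟨v0, v1, v2, hnz, hda, hdb⟩ :=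
    triple_orth (A i0) (A i1) (A i2) (B i0) (B i1) (B i2)
  obtain ⟨u0, u1, u2, hua, hub, hnd⟩ :=
    descent_orth p hp (v0.natAbs + v1.natAbs + v2.natAbs) v0 v1 v2
      (A i0) (A i1) (A i2) (B i0) (B i1) (B i2) le_rfl hnz hda hdb
  set g : Fin n → ℤ := fun j =>
    if j = i0 then u0 else if j = i1 then u1 else if j = i2 then u2 else 0 with hg
  have key : ∀ C : Fin n → ℤ, (∑ j, g j * C j) = u0 * C i0 + u1 * C i1 + u2 * C i2 := by
    intro C
    have hsub : ({i0, i1, i2} : Finset (Fin n)) ⊆ Finset.univ := Finset.subset_univ _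
    have hzero : ∀ x ∈ Finset.univ, x ∉ ({i0, i1, i2} : Finset (Fin n)) →
        g x * C x = 0 := by
      intro x _ hx
      simp only [Finset.mem_insert, Finset.mem_singleton] at hx
      push_neg at hx
      simp [hg, hx.1, hx.2.1, hx.2.2]
    rw [← Finset.sum_subset hsub hzero]
    rw [Finset.sum_insert (by simp [h01, h02]),
        Finset.sum_insert (by simp [h12]), Finset.sum_singleton]
    simp [hg, if_neg (Ne.symm h01), if_neg (Ne.symm h02), if_neg (Ne.symm h12)]
    ring
  refine ⟨g, by rw [key]; exact hua, by rw [key]; exact hub, ?_⟩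
  rcases hnd with h | h | h
  · exact ⟨i0, by simpa [hg] using h⟩
  · exact ⟨i1, by simpa [hg, if_neg (Ne.symm h01)] using h⟩
  · exact ⟨i2, by simpa [hg, if_neg (Ne.symm h02), if_neg (Ne.symm h12)] using h⟩

theorem stmt_3 (n : ℕ) (hn : 3 ≤ n) (m k : ℕ) (hm : 1 ≤ m) (hk : 2 ≤ k) :
    ¬ ∃ a b : FreeGroup (Fin n),
      ((List.finRange n).map (fun i => FreeGroup.of i ^ m)).prod = a ^ k * b ^ k := by
  rintro ⟨a, b, h⟩
  classical
  set p := k.minFac with hpdef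
  have hp : p.Prime := Nat.minFac_prime (by omega)
  haveI : Fact p.Prime := ⟨hp⟩
  have hp2 : 2 ≤ p := hp.two_le
  -- exponent-sum homomorphisms
  set e : Fin n → (FreeGroup (Fin n) →* Multiplicative ℤ) := fun i =>
    FreeGroup.lift (fun j => Multiplicative.ofAdd (if j = i then (1:ℤ) else 0)) with he
  obtain ⟨g, hgA, hgB, i₀, hgi₀⟩ :=
    exists_orth_vec hn p hp2 (fun i => Multiplicative.toAdd (e i a))
      (fun i => Multiplicative.toAdd (e i b))
  -- the ring
  set V : ℕ := m.factorization p with hV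
  set D : ℕ := p ^ V + 1 with hD
  set I : Ideal (Polynomial (ZMod p)) := Ideal.span {(X : Polynomial (ZMod p)) ^ D} with hI
  set mk : Polynomial (ZMod p) →+* (Polynomial (ZMod p) ⧸ I) := Ideal.Quotient.mk I with hmk
  have hpVpos : 1 ≤ p ^ V := Nat.one_le_pow _ _ (by omega)
  have hXzero : ∀ j : ℕ, D ≤ j → mk (X ^ j) = 0 := by
    intro j hj
    rw [hmk, Ideal.Quotient.eq_zero_iff_mem, hI]
    exact Ideal.mem_span_singleton.mpr (pow_dvd_pow _ hj)
  have hfresh : ∀ c : ℕ, ((1 : Polynomial (ZMod p)) + X) ^ p ^ c = 1 + X ^ p ^ c := by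
    intro c
    simpa using add_pow_char_pow (1 : Polynomial (ZMod p)) X p c
  have hDle : D ≤ p ^ (V + 1) := by
    have h2 : p ^ V * 2 ≤ p ^ V * p := Nat.mul_le_mul_left _ hp2
    have h3 : p ^ (V + 1) = p ^ V * p := pow_succ p V
    omega
  have hpow1 : (mk (1 + X)) ^ (p ^ (V + 1)) = 1 := by
    rw [← map_pow, hfresh (V + 1), map_add, map_one, hXzero _ hDle, add_zero]
  have hu : (mk (1 + X)) * (mk (1 + X)) ^ (p ^ (V + 1) - 1) = 1 := by
    have hpos : 1 ≤ p ^ (V + 1) := Nat.one_le_pow _ _ (by omega)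
    have hstep : mk (1 + X) * mk (1 + X) ^ (p ^ (V + 1) - 1)
        = mk (1 + X) ^ (p ^ (V + 1)) := by
      rw [← pow_succ']
      congr 1
      omega
    rw [hstep, hpow1]
  set w : (Polynomial (ZMod p) ⧸ I)ˣ := Units.mkOfMulEqOne _ _ hu with hw
  have hwval : (w : Polynomial (ZMod p) ⧸ I) = mk (1 + X) := rfl
  -- the homomorphism
  set φ : FreeGroup (Fin n) →* AffAux (Polynomial (ZMod p) ⧸ I) :=
    FreeGroup.lift (fun i => ⟨w ^ g i, if i = i₀ then 1 else 0⟩) with hφ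
  have hφof : ∀ i, φ (FreeGroup.of i)
      = (⟨w ^ g i, if i = i₀ then 1 else 0⟩ : AffAux _) := by
    intro i; rw [hφ]; exact FreeGroup.lift_apply_of
  -- s-component of φ x
  set σ : FreeGroup (Fin n) →* Multiplicative ℤ :=
    FreeGroup.lift (fun i => Multiplicative.ofAdd (g i)) with hσ
  set τ : FreeGroup (Fin n) →* Multiplicative ℤ :=
    MonoidHom.mk' (fun x => Multiplicative.ofAdd (∑ i, g i * Multiplicative.toAdd (e i x)))
      (by
        intro x y
        rw [← ofAdd_add, ← Finset.sum_add_distrib]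
        congr 1
        refine Finset.sum_congr rfl fun i _ => ?_
        rw [map_mul, toAdd_mul, mul_add]) with hτ
  have hστ : σ = τ := by
    refine FreeGroup.ext_hom _ _ fun j => ?_
    rw [hσ, hτ]
    simp only [FreeGroup.lift_apply_of, MonoidHom.mk'_apply]
    congr 1
    rw [he]
    simp only [FreeGroup.lift_apply_of, toAdd_ofAdd]
    rw [Finset.sum_congr rfl (fun i _ => by
      rw [show g i * (if j = i then (1:ℤ) else 0) = if j = i then g i else 0 by
        split <;> simp])]
    rw [Finset.sum_ite_eq]
    simp
  have hsφ : AffAux.sHom.comp φ = ((zpowersHom _ w).comp σ) := by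
    refine FreeGroup.ext_hom _ _ fun i => ?_
    simp only [MonoidHom.comp_apply]
    rw [hφof i, hσ]
    simp [AffAux.sHom, FreeGroup.lift_apply_of, zpowersHom_apply]
  have hφs : ∀ x, (φ x).s = w ^ (∑ i, g i * Multiplicative.toAdd (e i x)) := by
    intro x
    have h1 := DFunLike.congr_fun hsφ x
    simp only [MonoidHom.comp_apply] at h1
    have h2 : AffAux.sHom (φ x) = (φ x).s := rfl
    rw [h2, hστ, hτ] at h1
    simp only [MonoidHom.mk'_apply, zpowersHom_apply, toAdd_ofAdd] at h1
    exact h1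
  have hsa : (φ a).s = 1 := by rw [hφs a, hgA, zpow_zero]
  have hsb : (φ b).s = 1 := by rw [hφs b, hgB, zpow_zero]
  -- (k : R) = 0
  have hkR : ((k : ℕ) : Polynomial (ZMod p) ⧸ I) = 0 := by
    obtain ⟨d, hd⟩ := k.minFac_dvd
    have hpR : ((p : ℕ) : Polynomial (ZMod p) ⧸ I) = 0 := by
      have h1 : ((p : ℕ) : Polynomial (ZMod p)) = 0 := by
        rw [← map_natCast (C : ZMod p →+* Polynomial (ZMod p)) p, ZMod.natCast_self, map_zero]
      rw [← map_natCast mk p, h1, map_zero]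
    rw [← hpdef] at hd
    rw [hd]
    push_cast
    rw [hpR, zero_mul]
  have hak : φ a ^ k = 1 := by
    ext
    · rw [AffAux.pow_s, hsa, one_pow, AffAux.one_s]
    · rw [AffAux.pow_t, hsa, AffAux.one_t]
      simp [hkR]
  have hbk : φ b ^ k = 1 := by
    ext
    · rw [AffAux.pow_s, hsb, one_pow, AffAux.one_s]
    · rw [AffAux.pow_t, hsb, AffAux.one_t]
      simp [hkR]
  -- push the equation through φ
  have h2 : ((List.finRange n).map (fun i => φ (FreeGroup.of i) ^ m)).prod = 1 := by
    have h1 := congrArg φ h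
    rw [map_mul, map_pow, map_pow, hak, hbk, one_mul, map_list_prod, List.map_map] at h1
    have hmapeq : (List.map (⇑φ ∘ fun i => FreeGroup.of i ^ m) (List.finRange n))
        = (List.finRange n).map (fun i => φ (FreeGroup.of i) ^ m) := by
      refine List.map_congr_left fun i _ => ?_
      simp [Function.comp, map_pow]
    rwa [hmapeq] at h1
  obtain ⟨L₁, L₂, hsp⟩ := List.append_of_mem (List.mem_finRange i₀)
  have hnd := List.nodup_finRange n
  rw [hsp] at hnd
  have hnd' := List.nodup_append'.mp hnd
  have hi₀L₁ : i₀ ∉ L₁ := fun hmem => (hnd'.2.2 hmem) (List.mem_cons_self (a := i₀) (l := L₂))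
  have hi₀L₂ : i₀ ∉ L₂ := (List.nodup_cons.mp hnd'.2.1).1
  rw [hsp, List.map_append, List.prod_append, List.map_cons, List.prod_cons] at h2
  -- identify the pieces
  have hFne : ∀ i, i ≠ i₀ → φ (FreeGroup.of i) ^ m = AffAux.iota ((w ^ g i) ^ m) := by
    intro i hi
    rw [hφof i, if_neg hi, map_pow]
    rfl
  have hP1 : (L₁.map (fun i => φ (FreeGroup.of i) ^ m)).prod
      = AffAux.iota ((L₁.map (fun i => (w ^ g i) ^ m)).prod) := by
    rw [map_list_prod, List.map_map]
    congr 1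
    refine List.map_congr_left fun i hi => ?_
    simp only [Function.comp_apply]
    exact hFne i (fun he' => hi₀L₁ (he' ▸ hi))
  have hP2 : (L₂.map (fun i => φ (FreeGroup.of i) ^ m)).prod
      = AffAux.iota ((L₂.map (fun i => (w ^ g i) ^ m)).prod) := by
    rw [map_list_prod, List.map_map]
    congr 1
    refine List.map_congr_left fun i hi => ?_
    simp only [Function.comp_apply]
    exact hFne i (fun he' => hi₀L₂ (he' ▸ hi))
  set z : (Polynomial (ZMod p) ⧸ I)ˣ := w ^ g i₀ with hz
  set ν : Polynomial (ZMod p) ⧸ I :=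
    ∑ j ∈ Finset.range m, ((z : Polynomial (ZMod p) ⧸ I)) ^ j with hν
  have hmid : φ (FreeGroup.of i₀) ^ m = (⟨z ^ m, ν⟩ : AffAux _) := by
    rw [hφof i₀, if_pos rfl]
    ext
    · rw [AffAux.pow_s]
    · rw [AffAux.pow_t, mul_one, hν]
  have h3 := congrArg AffAux.t h2
  rw [hP1, hP2, hmid] at h3
  simp only [AffAux.mul_t, AffAux.mul_s, AffAux.iota_s, AffAux.iota_t, AffAux.one_t,
    mul_zero, add_zero, zero_add] at h3
  have hν0 : ν = 0 := (Units.mul_right_eq_zero _).mp h3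
  -- geometric series
  have hgeom := geom_sum_mul ((z : Polynomial (ZMod p) ⧸ I)) m
  rw [← hν, hν0, zero_mul] at hgeom
  have hzm : ((z : Polynomial (ZMod p) ⧸ I)) ^ m = 1 := by
    have h4 := hgeom.symm
    rwa [sub_eq_zero] at h4
  have hzmu : z ^ m = 1 := by
    ext
    rw [Units.val_pow_eq_pow_val, hzm, Units.val_one]
  -- exponent bookkeeping
  set m' : ℕ := m / p ^ V with hm'def
  have hmfact : p ^ V * m' = m := Nat.ordProj_mul_ordCompl_eq_self m p
  have hpm' : ¬ p ∣ m' := Nat.not_dvd_ordCompl hp (by omega)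
  set s : ℤ := g i₀ * (m' : ℤ) with hs
  set y : (Polynomial (ZMod p) ⧸ I)ˣ := w ^ (p ^ V) with hy
  have hys : y ^ s = 1 := by
    rw [hy, ← zpow_natCast w (p ^ V), ← zpow_mul]
    have hexp : ((p ^ V : ℕ) : ℤ) * s = g i₀ * (m : ℤ) := by
      rw [hs, ← hmfact]
      push_cast
      ring
    rw [hexp, zpow_mul, zpow_natCast]
    rw [← hz]
    exact hzmu
  set T : Polynomial (ZMod p) ⧸ I := mk (X ^ (p ^ V)) with hT
  have hyval : (y : Polynomial (ZMod p) ⧸ I) = 1 + T := by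
    rw [hy, Units.val_pow_eq_pow_val, hwval, ← map_pow, hfresh V, map_add, map_one, hT]
  have hyp : y ^ p = 1 := by
    rw [hy, ← pow_mul, show p ^ V * p = p ^ (V + 1) from (pow_succ p V).symm]
    ext
    rw [Units.val_pow_eq_pow_val, hwval, ← map_pow, hfresh (V + 1), map_add, map_one,
      hXzero _ hDle, add_zero, Units.val_one]
  -- reduce the exponent mod p
  have hppos : (0 : ℤ) < (p : ℤ) := by exact_mod_cast (by omega : 0 < p)
  have hpne : ((p : ℕ) : ℤ) ≠ 0 := by omega
  set r : ℕ := (s % (p : ℤ)).toNat with hr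
  have hrval : ((r : ℕ) : ℤ) = s % (p : ℤ) := Int.toNat_of_nonneg (Int.emod_nonneg s hpne)
  have hyr : y ^ r = 1 := by
    have hsplit : s = (p : ℤ) * (s / (p : ℤ)) + s % (p : ℤ) := (Int.mul_ediv_add_emod s p).symm
    have h5 : y ^ s = (y ^ ((p : ℤ) * (s / (p : ℤ)))) * y ^ (s % (p : ℤ)) := by
      rw [← zpow_add, ← hsplit]
    rw [hys] at h5
    have h6 : y ^ ((p : ℤ) * (s / (p : ℤ))) = 1 := by
      rw [zpow_mul, zpow_natCast, hyp, one_zpow]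
    rw [h6, one_mul] at h5
    rw [← zpow_natCast, hrval]
    exact h5.symm
  -- binomial
  have hT2 : T * T = 0 := by
    rw [hT, ← map_mul, ← pow_add]
    exact hXzero _ (by omega)
  have hbin : ((1 : Polynomial (ZMod p) ⧸ I) + T) ^ r
      = 1 + (r : Polynomial (ZMod p) ⧸ I) * T :=
    one_add_sq_zero_pow T hT2 r
  have hrT : (r : Polynomial (ZMod p) ⧸ I) * T = 0 := by
    have h5 : ((y : Polynomial (ZMod p) ⧸ I)) ^ r = 1 := by
      rw [← Units.val_pow_eq_pow_val, hyr, Units.val_one]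
    rw [hyval, hbin] at h5
    exact add_eq_left.mp h5
  -- contradiction from degrees
  have hmem : (X : Polynomial (ZMod p)) ^ D ∣ ((r : ℕ) : Polynomial (ZMod p)) * X ^ (p ^ V) := by
    rw [← Ideal.mem_span_singleton, ← hI, ← Ideal.Quotient.eq_zero_iff_mem]
    have h7 : (Ideal.Quotient.mk I) (((r : ℕ) : Polynomial (ZMod p)) * X ^ (p ^ V))
        = (r : Polynomial (ZMod p) ⧸ I) * T := by
      rw [hT, hmk, map_mul, map_natCast]
    rw [h7]
    exact hrT
  have hr0 : r ≠ 0 := by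
    intro h0
    have hmod : s % (p : ℤ) = 0 := by rw [← hrval, h0]; simp
    have hdvds : (p : ℤ) ∣ s := Int.dvd_of_emod_eq_zero hmod
    have hpZ : Prime ((p : ℕ) : ℤ) := Nat.prime_iff_prime_int.mp hp
    rcases hpZ.dvd_mul.mp (hs ▸ hdvds) with hd | hd
    · exact hgi₀ hd
    · exact hpm' (Int.natCast_dvd_natCast.mp hd)
  have hrlt : r < p := by
    have h6 : s % (p : ℤ) < (p : ℤ) := Int.emod_lt_of_pos s hppos
    omega
  have hc0 : ((r : ℕ) : ZMod p) ≠ 0 := by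
    intro h0
    have hd : p ∣ r := (CharP.cast_eq_zero_iff (ZMod p) p r).mp h0
    have := Nat.le_of_dvd (by omega) hd
    omega
  have hnz2 : ((r : ℕ) : Polynomial (ZMod p)) * X ^ (p ^ V) ≠ 0 := by
    rw [show ((r : ℕ) : Polynomial (ZMod p)) = C ((r : ℕ) : ZMod p) from (map_natCast C r).symm]
    exact mul_ne_zero (Polynomial.C_ne_zero.mpr hc0) (pow_ne_zero _ Polynomial.X_ne_zero)
  have hdeg := Polynomial.natDegree_le_of_dvd hmem hnz2
  rw [Polynomial.natDegree_X_pow,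
    show ((r : ℕ) : Polynomial (ZMod p)) = C ((r : ℕ) : ZMod p) from (map_natCast C r).symm,
    Polynomial.natDegree_C_mul_X_pow _ _ hc0] at hdeg
  omega
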